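/- arXiv:1704.08856 — 2 statements merged into one kernel-verified Lean document; each statement's English description precedes it below -/
import Mathlib

section
/- The pair (φ, R) with φ(x) = (4/3)x log|x| and R(x) = (2/|x|²)x⊗x − I belongs to W^{1,2}(B³, ℝ³) × W^{1,p}(B³, ℝ^{3×3}) for every p with 2 ≤ p < 3, but R ∉ W^{1,3}(B³). -/
open MeasureTheory

/-- The map `R(x) = (2/|x|²) x⊗x − I`. -/
noncomputable def Rmap (x : EuclideanSpace ℝ (Fin 3)) : Matrix (Fin 3) (Fin 3) ℝ :=
  Matrix.of fun i j => (2 / ‖x‖ ^ 2) * (x i * x j) - if i = j then (1 : ℝ) else 0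

/-- The map `φ(x) = (4/3) x log|x|`. -/
noncomputable def phiMap (x : EuclideanSpace ℝ (Fin 3)) : EuclideanSpace ℝ (Fin 3) :=
  ((4 / 3 : ℝ) * Real.log ‖x‖) • x

/-- Frobenius norm of the (pointwise classical) gradient of `φ`. -/
noncomputable def DphiFrob (x : EuclideanSpace ℝ (Fin 3)) : ℝ :=
  Real.sqrt (∑ i : Fin 3, ∑ k : Fin 3,
    (fderiv ℝ (fun y => phiMap y i) x (EuclideanSpace.single k 1)) ^ 2)

/-- Frobenius norm of the (pointwise classical) gradient of `R`. -/
noncomputable def DRFrob (x : EuclideanSpace ℝ (Fin 3)) : ℝ :=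
  Real.sqrt (∑ i : Fin 3, ∑ j : Fin 3, ∑ k : Fin 3,
    (fderiv ℝ (fun y => Rmap y i j) x (EuclideanSpace.single k 1)) ^ 2)

open Metric Set
open scoped ENNReal

section Aux

local notation "E3" => EuclideanSpace ℝ (Fin 3)

lemma finrank3 : Module.finrank ℝ (EuclideanSpace ℝ (Fin 3)) = 3 := by simp

instance : IsFiniteMeasure (volume.restrict (ball (0 : E3) 1)) :=
  ⟨by rw [Measure.restrict_apply_univ]; exact measure_ball_lt_top⟩

lemma hproj (x : E3) (i : Fin 3) :
    HasFDerivAt (fun y : E3 => y i) (EuclideanSpace.proj (𝕜 := ℝ) i) x :=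
  (EuclideanSpace.proj (𝕜 := ℝ) i).hasFDerivAt

lemma proj_single (i k : Fin 3) :
    (EuclideanSpace.proj (𝕜 := ℝ) i) (EuclideanSpace.single k (1:ℝ)) = if k = i then 1 else 0 := by
  simp [EuclideanSpace.single_apply, eq_comm]

lemma norm_sq_eq (x : E3) : ‖x‖ ^ 2 = x 0 ^ 2 + x 1 ^ 2 + x 2 ^ 2 := by
  rw [EuclideanSpace.norm_eq, Real.sq_sqrt (by positivity)]
  simp [Fin.sum_univ_three, sq_abs]

lemma abs_coord_le (x : E3) (i : Fin 3) : |x i| ≤ ‖x‖ := by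
  have hsum : ‖x‖ ^ 2 = ∑ l : Fin 3, (x l) ^ 2 := by
    rw [EuclideanSpace.norm_eq, Real.sq_sqrt (by positivity)]
    simp [sq_abs]
  have h1 : (x i) ^ 2 ≤ ‖x‖ ^ 2 := by
    rw [hsum]
    exact Finset.single_le_sum (f := fun l => (x l) ^ 2) (fun l _ => sq_nonneg _)
      (Finset.mem_univ i)
  calc |x i| = Real.sqrt ((x i) ^ 2) := (Real.sqrt_sq_eq_abs _).symm
    _ ≤ Real.sqrt (‖x‖ ^ 2) := Real.sqrt_le_sqrt h1
    _ = ‖x‖ := Real.sqrt_sq (norm_nonneg x)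

lemma fderiv_R_apply (x : E3) (hx : x ≠ 0) (i j k : Fin 3) :
    fderiv ℝ (fun y => Rmap y i j) x (EuclideanSpace.single k 1) =
      2 * ((if k = i then x j else 0) + (if k = j then x i else 0)) / ‖x‖ ^ 2
        - 4 * x i * x j * x k / (‖x‖ ^ 2) ^ 2 := by
  have hne : ‖x‖ ^ 2 ≠ 0 := pow_ne_zero _ (norm_ne_zero_iff.mpr hx)
  have hn : HasFDerivAt (fun y : E3 => ‖y‖ ^ 2) (2 • (innerSL ℝ x)) x :=
    (hasStrictFDerivAt_norm_sq x).hasFDerivAt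
  have hinv : HasFDerivAt (fun y : E3 => (‖y‖ ^ 2)⁻¹)
      ((-((‖x‖ ^ 2) ^ 2)⁻¹) • (2 • (innerSL ℝ x))) x :=
    (hasDerivAt_inv hne).comp_hasFDerivAt x hn
  have hd := ((hinv.const_mul (2:ℝ)).mul ((hproj x i).mul (hproj x j))).sub_const
      (if i = j then (1:ℝ) else 0)
  have hfd : fderiv ℝ (fun y : E3 => 2 * (‖y‖ ^ 2)⁻¹ * (y i * y j) - (if i = j then (1:ℝ) else 0)) x = _ :=
    hd.fderiv
  have hfun : (fun y => Rmap y i j)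
      = fun y : E3 => 2 * (‖y‖ ^ 2)⁻¹ * (y i * y j) - (if i = j then (1:ℝ) else 0) := by
    funext y; simp [Rmap, div_eq_mul_inv]
  rw [hfun, hfd]
  simp only [ContinuousLinearMap.add_apply, ContinuousLinearMap.smul_apply,
    ContinuousLinearMap.sub_apply, ContinuousLinearMap.coe_smul', Pi.smul_apply,
    innerSL_apply_apply, EuclideanSpace.inner_single_right, proj_single,
    smul_eq_mul, nsmul_eq_mul, map_one, star_trivial]
  by_cases h1 : k = i <;> by_cases h2 : k = j <;> simp [h1, h2] <;> field_simp <;> ring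

lemma fderiv_phi_apply (x : E3) (hx : x ≠ 0) (i k : Fin 3) :
    fderiv ℝ (fun y => phiMap y i) x (EuclideanSpace.single k 1) =
      4/3 * (x i * x k) / ‖x‖ ^ 2 + (if k = i then 2/3 * Real.log (‖x‖ ^ 2) else 0) := by
  have hne : ‖x‖ ^ 2 ≠ 0 := pow_ne_zero _ (norm_ne_zero_iff.mpr hx)
  have hn : HasFDerivAt (fun y : E3 => ‖y‖ ^ 2) (2 • (innerSL ℝ x)) x :=
    (hasStrictFDerivAt_norm_sq x).hasFDerivAt
  have hlog : HasFDerivAt (fun y : E3 => Real.log (‖y‖ ^ 2))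
      ((‖x‖ ^ 2)⁻¹ • (2 • (innerSL ℝ x))) x :=
    hn.log hne
  have hd : HasFDerivAt (fun y : E3 => (2/3 * Real.log (‖y‖ ^ 2)) * y i) _ x :=
    (hlog.const_mul (2/3 : ℝ)).mul (hproj x i)
  have hfun : (fun y => phiMap y i) = fun y : E3 => (2/3 * Real.log (‖y‖ ^ 2)) * y i := by
    funext y
    simp only [phiMap, PiLp.smul_apply, smul_eq_mul]
    rw [Real.log_pow]
    push_cast
    ring
  rw [hfun, hd.fderiv]
  simp only [ContinuousLinearMap.add_apply, ContinuousLinearMap.smul_apply,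
    ContinuousLinearMap.coe_smul', Pi.smul_apply, innerSL_apply_apply, proj_single,
    smul_eq_mul, nsmul_eq_mul, star_trivial, EuclideanSpace.inner_single_right, starRingEnd_apply]
  rcases eq_or_ne k i with rfl | h
  · simp only [if_pos rfl, if_true]
    field_simp
    ring
  · simp only [if_neg h, eq_comm]
    simp [h]
    field_simp
    ring

lemma DRFrob_eq (x : E3) (hx : x ≠ 0) : DRFrob x = 4 * ‖x‖ ^ (-1 : ℝ) := by
  have hne : ‖x‖ ^ 2 ≠ 0 := pow_ne_zero _ (norm_ne_zero_iff.mpr hx)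
  have key : (∑ i : Fin 3, ∑ j : Fin 3, ∑ k : Fin 3,
      (fderiv ℝ (fun y => Rmap y i j) x (EuclideanSpace.single k 1)) ^ 2) = 16 / ‖x‖ ^ 2 := by
    simp only [fderiv_R_apply x hx]
    have hterm : ∀ A B C D : ℝ, (2 * A / ‖x‖ ^ 2 - 4 * B * C * D / (‖x‖ ^ 2) ^ 2) ^ 2
        = (2 * A * ‖x‖ ^ 2 - 4 * (B * C * D)) ^ 2 / (‖x‖ ^ 2) ^ 4 := by
      intro A B C D; field_simp
    simp only [hterm, ← Finset.sum_div]
    have key2 : (∑ i : Fin 3, ∑ j : Fin 3, ∑ k : Fin 3,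
        (2 * ((if k = i then x j else 0) + (if k = j then x i else 0)) * ‖x‖ ^ 2
          - 4 * (x i * x j * x k)) ^ 2) = 16 * (‖x‖ ^ 2) ^ 3 := by
      simp only [Fin.sum_univ_three]
      simp only [Fin.reduceEq, reduceIte, mul_zero, zero_mul, add_zero, zero_add, mul_one,
        one_mul, if_true, if_false]
      rw [norm_sq_eq x]
      ring
    rw [key2]
    field_simp
  rw [DRFrob, key, show (16:ℝ) / ‖x‖ ^ 2 = (4 * ‖x‖ ^ (-1 : ℝ)) ^ 2 by
    rw [Real.rpow_neg_one]; field_simp; norm_num]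
  exact Real.sqrt_sq (by positivity)

lemma DphiFrob_le (x : E3) (hx : x ≠ 0) (hx1 : ‖x‖ < 1) :
    DphiFrob x ≤ 12 * ‖x‖ ^ (-(1/2) : ℝ) := by
  have hr0 : 0 < ‖x‖ := norm_pos_iff.mpr hx
  set r := ‖x‖ with hr
  set m := r ^ (-(1/2) : ℝ) with hm
  have hmpos : 0 < m := Real.rpow_pos_of_pos hr0 _
  have hm1 : 1 ≤ m := Real.one_le_rpow_of_pos_of_le_one_of_nonpos hr0 hx1.le (by norm_num)
  have hlogm : Real.log m = -(1/2) * Real.log r := Real.log_rpow hr0 _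
  have hlogr0 : Real.log r ≤ 0 := Real.log_nonpos hr0.le hx1.le
  have hlogr : -Real.log r ≤ 2 * m := by
    have h1 : Real.log m ≤ m - 1 := Real.log_le_sub_one_of_pos hmpos
    nlinarith
  have hentry : ∀ i k : Fin 3,
      |fderiv ℝ (fun y => phiMap y i) x (EuclideanSpace.single k 1)| ≤ 4 * m := by
    intro i k
    rw [fderiv_phi_apply x hx i k]
    have hq : |4/3 * (x i * x k) / r ^ 2| ≤ 4/3 := by
      rw [abs_div, abs_mul]
      rw [div_le_iff₀ (by positivity)]
      have h1 := abs_coord_le x i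
      have h2 := abs_coord_le x k
      have h3 : |x i * x k| ≤ r * r := by
        rw [abs_mul]
        exact mul_le_mul h1 h2 (abs_nonneg _) hr0.le
      have : |(4:ℝ)/3| = 4/3 := by norm_num
      rw [this, abs_pow, abs_of_nonneg hr0.le]
      nlinarith
    have hc : |if k = i then 2/3 * Real.log (r ^ 2) else 0| ≤ 8/3 * m := by
      split_ifs
      · rw [Real.log_pow]
        push_cast
        rw [abs_mul, abs_mul]
        have : |Real.log r| = -Real.log r := abs_of_nonpos hlogr0
        rw [this]
        have h43 : |(2:ℝ)/3| = 2/3 := by norm_num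
        have h2 : |(2:ℝ)| = 2 := by norm_num
        rw [h43, h2]
        nlinarith
      · simp
        positivity
    calc |4/3 * (x i * x k) / r ^ 2 + (if k = i then 2/3 * Real.log (r ^ 2) else 0)|
        ≤ |4/3 * (x i * x k) / r ^ 2| + |if k = i then 2/3 * Real.log (r ^ 2) else 0| :=
          abs_add_le _ _
      _ ≤ 4/3 + 8/3 * m := add_le_add hq hc
      _ ≤ 4 * m := by nlinarith
  have hsum : (∑ i : Fin 3, ∑ k : Fin 3,
      (fderiv ℝ (fun y => phiMap y i) x (EuclideanSpace.single k 1)) ^ 2)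
      ≤ ∑ _i : Fin 3, ∑ _k : Fin 3, (4 * m) ^ 2 := by
    refine Finset.sum_le_sum fun i _ => Finset.sum_le_sum fun k _ => ?_
    have h := abs_le.mp (hentry i k)
    exact sq_le_sq' h.1 h.2
  calc DphiFrob x ≤ Real.sqrt (∑ _i : Fin 3, ∑ _k : Fin 3, (4 * m) ^ 2) :=
        Real.sqrt_le_sqrt hsum
    _ = 12 * m := by
        simp only [Finset.sum_const, Finset.card_univ, Fintype.card_fin, nsmul_eq_mul]
        rw [show (3:ℕ) * ((3:ℕ) * (4 * m) ^ 2) = (12 * m) ^ 2 by push_cast; ring]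
        exact Real.sqrt_sq (by positivity)

lemma L1 {s : ℝ} (hs : s < 3) :
    ∫⁻ x in ball (0 : E3) 1, ENNReal.ofReal (‖x‖ ^ (-s)) < ∞ := by
  rcases le_or_gt s 0 with h0 | h0
  · calc ∫⁻ x in ball (0 : E3) 1, ENNReal.ofReal (‖x‖ ^ (-s))
        ≤ ∫⁻ _x in ball (0 : E3) 1, 1 := by
          refine setLIntegral_mono' measurableSet_ball fun x hx => ?_
          simp only [mem_ball_zero_iff] at hx
          rcases eq_or_ne x 0 with rfl | hx0
          · rcases eq_or_lt_of_le h0 with rfl | h0'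
            · simp
            · rw [norm_zero, Real.zero_rpow (by linarith)]; simp
          · refine ENNReal.ofReal_le_of_le_toReal ?_
            rw [ENNReal.toReal_one]
            exact Real.rpow_le_one (norm_nonneg _) hx.le (by linarith)
      _ < ∞ := by rw [setLIntegral_one]; exact measure_ball_lt_top
  · set μ := volume.restrict (ball (0 : E3) 1) with hμ
    have hmeas : Measurable fun x : E3 => ‖x‖ ^ (-s) := by fun_prop
    have h := lintegral_eq_lintegral_meas_le μ
        (Filter.Eventually.of_forall fun x : E3 => Real.rpow_nonneg (norm_nonneg x) _)
        hmeas.aemeasurable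
    rw [h]
    have key : ∀ t : ℝ, t ∈ Ioi (1:ℝ) →
        μ {a : E3 | t ≤ ‖a‖ ^ (-s)} ≤ ENNReal.ofReal (t ^ (-3/s)) * volume (ball (0:E3) 1) := by
      intro t ht
      have ht1 : (1:ℝ) < t := ht
      have ht0 : (0:ℝ) < t := lt_trans zero_lt_one ht1
      have hsub : {a : E3 | t ≤ ‖a‖ ^ (-s)} ⊆ closedBall (0:E3) (t ^ (-s⁻¹)) := by
        intro a ha
        simp only [mem_setOf_eq] at ha
        simp only [mem_closedBall_zero_iff]
        rcases eq_or_ne a 0 with rfl | ha0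
        · simp only [norm_zero]; positivity
        · have hna : 0 < ‖a‖ := norm_pos_iff.mpr ha0
          have := Real.rpow_le_rpow_of_nonpos ht0 ha (neg_nonpos.mpr (inv_nonneg.mpr h0.le))
          rwa [← Real.rpow_mul hna.le, neg_mul_neg, mul_inv_cancel₀ h0.ne',
            Real.rpow_one] at this
      calc μ {a : E3 | t ≤ ‖a‖ ^ (-s)} ≤ volume (closedBall (0:E3) (t ^ (-s⁻¹))) :=
            le_trans (measure_mono hsub) (Measure.restrict_le_self _)
        _ = ENNReal.ofReal ((t ^ (-s⁻¹)) ^ (3:ℕ)) * volume (ball (0:E3) 1) := by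
            rw [Measure.addHaar_closedBall _ _ (by positivity), finrank3]
        _ = ENNReal.ofReal (t ^ (-3/s)) * volume (ball (0:E3) 1) := by
            rw [← Real.rpow_natCast (t ^ (-s⁻¹)) 3, ← Real.rpow_mul ht0.le]
            congr 2
            ring
    calc ∫⁻ t in Ioi (0:ℝ), μ {a : E3 | t ≤ ‖a‖ ^ (-s)}
        ≤ ∫⁻ t in Ioc (0:ℝ) 1 ∪ Ioi 1, μ {a : E3 | t ≤ ‖a‖ ^ (-s)} :=
          lintegral_mono_set Ioi_subset_Ioc_union_Ioi
      _ ≤ (∫⁻ t in Ioc (0:ℝ) 1, μ {a : E3 | t ≤ ‖a‖ ^ (-s)})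
            + ∫⁻ t in Ioi (1:ℝ), μ {a : E3 | t ≤ ‖a‖ ^ (-s)} := lintegral_union_le _ _ _
      _ < ∞ := by
          refine ENNReal.add_lt_top.2 ⟨?_, ?_⟩
          · calc (∫⁻ t in Ioc (0:ℝ) 1, μ {a : E3 | t ≤ ‖a‖ ^ (-s)})
                ≤ ∫⁻ _t in Ioc (0:ℝ) 1, volume (ball (0:E3) 1) := by
                  refine setLIntegral_mono' measurableSet_Ioc fun t _ => ?_
                  rw [hμ]
                  exact le_trans (measure_mono (subset_univ _))
                    (le_of_eq (Measure.restrict_apply_univ _))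
              _ < ∞ := by
                  rw [setLIntegral_const]
                  exact ENNReal.mul_lt_top measure_ball_lt_top (by simp)
          · have hint : IntegrableOn (fun t : ℝ => t ^ (-3/s)) (Ioi 1) := by
              apply integrableOn_Ioi_rpow_of_lt _ zero_lt_one
              rw [neg_div, neg_lt_neg_iff]
              rw [lt_div_iff₀ h0]
              linarith
            have hfin : ∫⁻ t in Ioi (1:ℝ), ENNReal.ofReal (t ^ (-3/s)) < ∞ := by
              have := hint.2
              rw [HasFiniteIntegral] at this
              refine lt_of_le_of_lt (le_of_eq ?_) this
              refine setLIntegral_congr_fun measurableSet_Ioi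
                (fun t ht => ?_)
              rw [Real.enorm_eq_ofReal (Real.rpow_nonneg (le_of_lt (lt_trans zero_lt_one ht)) _)]
            calc ∫⁻ t in Ioi (1:ℝ), μ {a : E3 | t ≤ ‖a‖ ^ (-s)}
                ≤ ∫⁻ t in Ioi (1:ℝ), ENNReal.ofReal (t ^ (-3/s)) * volume (ball (0:E3) 1) :=
                  setLIntegral_mono' measurableSet_Ioi key
              _ = (∫⁻ t in Ioi (1:ℝ), ENNReal.ofReal (t ^ (-3/s))) * volume (ball (0:E3) 1) := by
                  rw [lintegral_mul_const' _ _ measure_ball_lt_top.ne]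
              _ < ∞ := ENNReal.mul_lt_top hfin measure_ball_lt_top

lemma master {t p : ℝ} (hp : 0 < p) (htp : t * p < 3) :
    MemLp (fun x : E3 => ‖x‖ ^ (-t)) (ENNReal.ofReal p)
      (volume.restrict (ball (0 : E3) 1)) := by
  have hp0 : ENNReal.ofReal p ≠ 0 := by simp [hp, hp.not_ge]
  refine ⟨(by fun_prop : Measurable fun x : E3 => ‖x‖ ^ (-t)).aestronglyMeasurable, ?_⟩
  rw [eLpNorm_eq_lintegral_rpow_enorm_toReal hp0 ENNReal.ofReal_ne_top]
  refine ENNReal.rpow_lt_top_of_nonneg (by positivity) ?_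
  have htr : (ENNReal.ofReal p).toReal = p := ENNReal.toReal_ofReal hp.le
  rw [htr]
  have : ∀ x : E3, ‖‖x‖ ^ (-t)‖ₑ ^ p = ENNReal.ofReal (‖x‖ ^ (-(t * p))) := by
    intro x
    rw [Real.enorm_eq_ofReal (Real.rpow_nonneg (norm_nonneg _) _),
      ENNReal.ofReal_rpow_of_nonneg (Real.rpow_nonneg (norm_nonneg _) _) hp.le,
      ← Real.rpow_mul (norm_nonneg _), neg_mul]
  simp only [this]
  exact (L1 htp).ne

lemma diverge : ∫⁻ x in ball (0 : E3) 1, ENNReal.ofReal (‖x‖ ^ (-(3:ℝ))) = ∞ := by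
  set μ := volume.restrict (ball (0 : E3) 1) with hμ
  have hmeas : Measurable fun x : E3 => ‖x‖ ^ (-(3:ℝ)) := by fun_prop
  rw [lintegral_eq_lintegral_meas_le μ
      (Filter.Eventually.of_forall fun x : E3 => Real.rpow_nonneg (norm_nonneg x) _)
      hmeas.aemeasurable]
  have v1pos : 0 < volume (ball (0:E3) 1) := measure_ball_pos _ _ zero_lt_one
  have key : ∀ t : ℝ, t ∈ Ioi (1:ℝ) →
      ENNReal.ofReal (t⁻¹) * volume (ball (0:E3) 1) ≤ μ {a : E3 | t ≤ ‖a‖ ^ (-(3:ℝ))} := by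
    intro t ht
    have ht1 : (1:ℝ) < t := ht
    have ht0 : (0:ℝ) < t := lt_trans zero_lt_one ht1
    have hrpos : 0 < t ^ (-(3:ℝ))⁻¹ := Real.rpow_pos_of_pos ht0 _
    have hrlt1 : t ^ (-(3:ℝ))⁻¹ < 1 := by
      apply Real.rpow_lt_one_of_one_lt_of_neg ht1
      norm_num
    have hsub : ball (0:E3) (t ^ (-(3:ℝ))⁻¹) \ {0} ⊆ {a : E3 | t ≤ ‖a‖ ^ (-(3:ℝ))} := by
      rintro a ⟨ha, ha0⟩
      simp only [mem_ball_zero_iff] at ha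
      simp only [mem_setOf_eq]
      have hna : 0 < ‖a‖ := norm_pos_iff.mpr (by simpa using ha0)
      have := Real.rpow_le_rpow_of_nonpos hna ha.le (by norm_num : (-3:ℝ) ≤ 0)
      calc t = (t ^ (-(3:ℝ))⁻¹) ^ (-3:ℝ) := by
            rw [← Real.rpow_mul ht0.le]; norm_num
        _ ≤ ‖a‖ ^ (-3:ℝ) := this
        _ = ‖a‖ ^ (-(3:ℝ)) := by norm_num
    calc ENNReal.ofReal (t⁻¹) * volume (ball (0:E3) 1)
        = volume (ball (0:E3) (t ^ (-(3:ℝ))⁻¹)) := by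
          rw [Measure.addHaar_ball _ _ hrpos.le, finrank3]
          congr 2
          rw [← Real.rpow_natCast (t ^ (-(3:ℝ))⁻¹) 3, ← Real.rpow_mul ht0.le,
            show (-3:ℝ)⁻¹ * (3:ℕ) = -1 by norm_num, Real.rpow_neg_one]
      _ = volume (ball (0:E3) (t ^ (-(3:ℝ))⁻¹) \ {0}) := by
          rw [measure_diff_null (measure_singleton _)]
      _ = μ (ball (0:E3) (t ^ (-(3:ℝ))⁻¹) \ {0}) := by
          rw [hμ, Measure.restrict_apply (measurableSet_ball.diff (measurableSet_singleton _))]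
          rw [inter_eq_left.mpr (diff_subset.trans (ball_subset_ball hrlt1.le))]
      _ ≤ μ {a : E3 | t ≤ ‖a‖ ^ (-(3:ℝ))} := measure_mono hsub
  have hlow : ∫⁻ t in Ioi (1:ℝ), ENNReal.ofReal (t⁻¹) * volume (ball (0:E3) 1)
      ≤ ∫⁻ t in Ioi (0:ℝ), μ {a : E3 | t ≤ ‖a‖ ^ (-(3:ℝ))} :=
    le_trans (setLIntegral_mono' measurableSet_Ioi key)
      (lintegral_mono_set (Ioi_subset_Ioi zero_le_one))
  refine eq_top_iff.mpr (le_trans ?_ hlow)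
  rw [lintegral_mul_const' _ _ measure_ball_lt_top.ne]
  have hdiv : ∫⁻ t in Ioi (1:ℝ), ENNReal.ofReal t⁻¹ = ∞ := by
    by_contra hfin
    have hint : IntegrableOn (fun t : ℝ => t ^ (-1:ℝ)) (Ioi 1) := by
      constructor
      · exact (by fun_prop : Measurable fun t : ℝ => t ^ (-1:ℝ)).aestronglyMeasurable
      · rw [HasFiniteIntegral]
        have : ∀ t ∈ Ioi (1:ℝ), ‖t ^ (-1:ℝ)‖ₑ = ENNReal.ofReal t⁻¹ := by
          intro t ht
          rw [Real.enorm_eq_ofReal (Real.rpow_nonneg (le_of_lt (lt_trans zero_lt_one ht)) _),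
            Real.rpow_neg_one]
        rw [setLIntegral_congr_fun measurableSet_Ioi this]
        exact lt_top_iff_ne_top.mpr hfin
    rw [integrableOn_Ioi_rpow_iff zero_lt_one] at hint
    linarith
  rw [hdiv, ENNReal.top_mul v1pos.ne']

lemma ae_ne_zero : ∀ᵐ x ∂(volume.restrict (ball (0 : E3) 1)), x ≠ 0 := by
  rw [ae_iff]
  have : {x : E3 | ¬ x ≠ 0} = {0} := by ext y; simp
  rw [this]
  exact le_antisymm (le_trans (Measure.restrict_le_self _) (le_of_eq (measure_singleton _)))
    zero_le

lemma phi_bound (x : E3) (hx : ‖x‖ < 1) : ‖phiMap x‖ ≤ 4/3 := by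
  rcases eq_or_ne x 0 with rfl | hx0
  · simp [phiMap]
    norm_num
  · have hr0 : 0 < ‖x‖ := norm_pos_iff.mpr hx0
    have hlog0 : Real.log ‖x‖ ≤ 0 := Real.log_nonpos hr0.le hx.le
    have hkey : -Real.log ‖x‖ ≤ ‖x‖⁻¹ := by
      have := Real.log_le_sub_one_of_pos (inv_pos.mpr hr0)
      rw [Real.log_inv] at this
      linarith [inv_pos.mpr hr0]
    rw [phiMap, norm_smul, Real.norm_eq_abs, abs_mul,
      abs_of_nonpos hlog0, show |(4:ℝ)/3| = 4/3 by norm_num]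
    have hinv : (4:ℝ)/3 * ‖x‖⁻¹ * ‖x‖ = 4/3 := by field_simp
    nlinarith [mul_le_mul_of_nonneg_right hkey hr0.le]

lemma Rentry_bound (x : E3) (i j : Fin 3) : |Rmap x i j| ≤ 3 := by
  rcases eq_or_ne x 0 with rfl | hx0
  · have : (0 : E3) i = 0 := rfl
    simp [Rmap, this]
    split_ifs <;> norm_num
  · have hr0 : 0 < ‖x‖ := norm_pos_iff.mpr hx0
    have h1 : |2 / ‖x‖ ^ 2 * (x i * x j)| ≤ 2 := by
      rw [abs_mul, abs_div, abs_mul, show |(2:ℝ)| = 2 by norm_num, abs_pow,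
        abs_of_nonneg hr0.le, div_mul_eq_mul_div, div_le_iff₀ (by positivity)]
      nlinarith [abs_coord_le x i, abs_coord_le x j, abs_nonneg (x i), abs_nonneg (x j)]
    have h2 : |if i = j then (1:ℝ) else 0| ≤ 1 := by split_ifs <;> norm_num
    calc |Rmap x i j| = |2 / ‖x‖ ^ 2 * (x i * x j) - if i = j then (1:ℝ) else 0| := rfl
      _ ≤ |2 / ‖x‖ ^ 2 * (x i * x j)| + |if i = j then (1:ℝ) else 0| := abs_sub _ _
      _ ≤ 3 := by linarith

lemma Rnorm_bound (x : E3) :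
    ‖Real.sqrt (∑ i : Fin 3, ∑ j : Fin 3, (Rmap x i j) ^ 2)‖ ≤ 9 := by
  rw [Real.norm_eq_abs, abs_of_nonneg (Real.sqrt_nonneg _)]
  have hsum : (∑ i : Fin 3, ∑ j : Fin 3, (Rmap x i j) ^ 2)
      ≤ ∑ _i : Fin 3, ∑ _j : Fin 3, (3:ℝ) ^ 2 := by
    refine Finset.sum_le_sum fun i _ => Finset.sum_le_sum fun j _ => ?_
    have h := abs_le.mp (Rentry_bound x i j)
    exact sq_le_sq' h.1 h.2
  calc Real.sqrt (∑ i : Fin 3, ∑ j : Fin 3, (Rmap x i j) ^ 2)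
      ≤ Real.sqrt (∑ _i : Fin 3, ∑ _j : Fin 3, (3:ℝ) ^ 2) := Real.sqrt_le_sqrt hsum
    _ ≤ 9 := by
        simp only [Finset.sum_const, Finset.card_univ, Fintype.card_fin, nsmul_eq_mul]
        rw [show (3:ℕ) * ((3:ℕ) * (3:ℝ) ^ 2) = 9 ^ 2 by push_cast; ring]
        rw [Real.sqrt_sq (by norm_num)]

lemma meas_coord (i : Fin 3) : Measurable fun x : E3 => x i :=
  (EuclideanSpace.proj (𝕜 := ℝ) i).continuous.measurable

lemma measPhi : Measurable phiMap :=
  ((Real.measurable_log.comp measurable_norm).const_mul _).smul measurable_id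

lemma measDphi : Measurable DphiFrob := by
  apply Real.continuous_sqrt.measurable.comp
  exact Finset.measurable_sum _ fun i _ => Finset.measurable_sum _ fun k _ =>
    (measurable_fderiv_apply_const ℝ (fun y => phiMap y i) (EuclideanSpace.single k 1)).pow_const 2

lemma measDR : Measurable DRFrob := by
  apply Real.continuous_sqrt.measurable.comp
  exact Finset.measurable_sum _ fun i _ => Finset.measurable_sum _ fun j _ =>
    Finset.measurable_sum _ fun k _ =>
      (measurable_fderiv_apply_const ℝ (fun y => Rmap y i j)
        (EuclideanSpace.single k 1)).pow_const 2

lemma measRn : Measurable fun x : E3 => Real.sqrt (∑ i : Fin 3, ∑ j : Fin 3, (Rmap x i j) ^ 2) := by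
  apply Real.continuous_sqrt.measurable.comp
  refine Finset.measurable_sum _ fun i _ => Finset.measurable_sum _ fun j _ => ?_
  have : Measurable fun x : E3 => Rmap x i j := by
    have : (fun x : E3 => Rmap x i j)
        = fun x : E3 => 2 / ‖x‖ ^ 2 * (x i * x j) - (if i = j then (1:ℝ) else 0) := rfl
    rw [this]
    exact ((measurable_const.div (measurable_norm.pow_const 2)).mul
      ((meas_coord i).mul (meas_coord j))).sub measurable_const
  exact this.pow_const 2

end Aux

/-- `(φ, R) ∈ W^{1,2}(B³,ℝ³) × W^{1,p}(B³,ℝ^{3×3})` for all `2 ≤ p < 3`,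
but `R ∉ W^{1,3}(B³)`. -/
theorem stmt8 :
    MemLp phiMap 2 (volume.restrict (Metric.ball (0 : EuclideanSpace ℝ (Fin 3)) 1)) ∧
    MemLp DphiFrob 2 (volume.restrict (Metric.ball (0 : EuclideanSpace ℝ (Fin 3)) 1)) ∧
    (∀ p : ℝ, 2 ≤ p → p < 3 →
      MemLp (fun x => Real.sqrt (∑ i : Fin 3, ∑ j : Fin 3, (Rmap x i j) ^ 2))
          (ENNReal.ofReal p)
          (volume.restrict (Metric.ball (0 : EuclideanSpace ℝ (Fin 3)) 1)) ∧
      MemLp DRFrob (ENNReal.ofReal p)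
          (volume.restrict (Metric.ball (0 : EuclideanSpace ℝ (Fin 3)) 1))) ∧
    ¬ MemLp DRFrob 3 (volume.restrict (Metric.ball (0 : EuclideanSpace ℝ (Fin 3)) 1)) := by
  have hball : ∀ᵐ x ∂(volume.restrict (Metric.ball (0 : EuclideanSpace ℝ (Fin 3)) 1)),
      x ∈ Metric.ball (0 : EuclideanSpace ℝ (Fin 3)) 1 := ae_restrict_mem measurableSet_ball
  have hne := ae_ne_zero
  have hofReal2 : (2 : ℝ≥0∞) = ENNReal.ofReal 2 := by norm_num
  refine ⟨?_, ?_, ?_, ?_⟩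
  · refine MemLp.of_bound measPhi.aestronglyMeasurable (4/3 : ℝ) ?_
    filter_upwards [hball] with x hx
    exact phi_bound x (mem_ball_zero_iff.mp hx)
  · have hg : MemLp (fun x : EuclideanSpace ℝ (Fin 3) => 12 * ‖x‖ ^ (-(1/2) : ℝ)) 2
        (volume.restrict (Metric.ball (0 : EuclideanSpace ℝ (Fin 3)) 1)) := by
      have := (master (by norm_num : (0:ℝ) < 2) (by norm_num : (1/2 : ℝ) * 2 < 3)).const_mul (12:ℝ)
      rwa [show ENNReal.ofReal 2 = 2 by norm_num] at this
    refine hg.of_le measDphi.aestronglyMeasurable ?_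
    filter_upwards [hball, hne] with x hx hx0
    have hb := DphiFrob_le x hx0 (mem_ball_zero_iff.mp hx)
    rw [Real.norm_eq_abs, Real.norm_eq_abs, abs_of_nonneg (by positivity : (0:ℝ) ≤ 12 * ‖x‖ ^ (-(1/2):ℝ))]
    rw [abs_of_nonneg (show (0:ℝ) ≤ DphiFrob x from Real.sqrt_nonneg _)]
    exact hb
  · intro p hp2 hp3
    have hp0 : (0:ℝ) < p := by linarith
    constructor
    · exact MemLp.of_bound measRn.aestronglyMeasurable 9
        (Filter.Eventually.of_forall Rnorm_bound)
    · have hg : MemLp (fun x : EuclideanSpace ℝ (Fin 3) => 4 * ‖x‖ ^ (-1 : ℝ))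
          (ENNReal.ofReal p)
          (volume.restrict (Metric.ball (0 : EuclideanSpace ℝ (Fin 3)) 1)) :=
        (master hp0 (by linarith : (1:ℝ) * p < 3)).const_mul (4:ℝ)
      refine hg.of_le measDR.aestronglyMeasurable ?_
      filter_upwards [hne] with x hx0
      rw [DRFrob_eq x hx0]
  · intro h
    obtain ⟨hm, hsn⟩ := h.imp id id
    rw [eLpNorm_eq_lintegral_rpow_enorm_toReal (by norm_num) (by norm_num)] at hsn
    have h3 : ((3:ℝ≥0∞)).toReal = 3 := by norm_num
    rw [h3] at hsn
    have hfin : (∫⁻ x, ‖DRFrob x‖ₑ ^ (3:ℝ)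
        ∂(volume.restrict (Metric.ball (0 : EuclideanSpace ℝ (Fin 3)) 1))) < ⊤ := by
      by_contra hcon
      rw [not_lt, top_le_iff] at hcon
      rw [hcon] at hsn
      simp [ENNReal.top_rpow_of_pos (by norm_num : (0:ℝ) < 1/3)] at hsn
    have hle : ∀ᵐ x ∂(volume.restrict (Metric.ball (0 : EuclideanSpace ℝ (Fin 3)) 1)),
        ENNReal.ofReal (‖x‖ ^ (-(3:ℝ))) ≤ ‖DRFrob x‖ₑ ^ (3:ℝ) := by
      filter_upwards [hne] with x hx0
      rw [DRFrob_eq x hx0,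
        Real.enorm_eq_ofReal (by positivity),
        ENNReal.ofReal_rpow_of_nonneg (by positivity) (by norm_num)]
      apply ENNReal.ofReal_le_ofReal
      rw [Real.mul_rpow (by norm_num) (Real.rpow_nonneg (norm_nonneg _) _),
        ← Real.rpow_mul (norm_nonneg x)]
      have h4 : (1:ℝ) ≤ (4:ℝ) ^ (3:ℝ) := by
        rw [show (3:ℝ) = ((3:ℕ):ℝ) by norm_num, Real.rpow_natCast]
        norm_num
      have h5 : (0:ℝ) ≤ ‖x‖ ^ ((-1) * (3:ℝ)) := Real.rpow_nonneg (norm_nonneg _) _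
      calc ‖x‖ ^ (-(3:ℝ)) = 1 * ‖x‖ ^ ((-1) * (3:ℝ)) := by norm_num
        _ ≤ (4:ℝ) ^ (3:ℝ) * ‖x‖ ^ ((-1) * (3:ℝ)) := by nlinarith
    have hmono := lintegral_mono_ae hle
    rw [diverge] at hmono
    exact absurd (top_le_iff.mp hmono) hfin.ne
end

section
/- Let m ≥ 2, p > 1, ε ∈ (0,1], and A = (a_{ij}) an m×m real symmetric matrix satisfying a_{1j} = a_{j1} given, with τ := Σ_{h=1}^m a_{hh}. Then Σ_{i,j} a_{ij}² ≥ ((m−ε)/(m−1)) a₁₁² + 2 Σ_{h=2}^m a_{h1}² − ((ε^{−1}−1)/(m−1)) τ², i.e. the pointwise algebraic estimate used in the improved Kato inequality. -/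
/-- the pointwise algebraic estimate used in the improved Kato inequality,
for an `m×m` symmetric matrix, `m = n + 2 ≥ 2`. -/
theorem stmt14 (n : ℕ) (p ε : ℝ) (hp : 1 < p) (hε : 0 < ε) (hε1 : ε ≤ 1)
    (a : Fin (n + 2) → Fin (n + 2) → ℝ) (hsymm : ∀ i j, a i j = a j i)
    (τ : ℝ) (hτ : τ = ∑ h, a h h) :
    (((n + 2 : ℝ) - ε) / ((n + 2 : ℝ) - 1)) * a 0 0 ^ 2 +
        2 * ∑ h ∈ Finset.univ \ {(0 : Fin (n + 2))}, a h 0 ^ 2 -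
        ((ε⁻¹ - 1) / ((n + 2 : ℝ) - 1)) * τ ^ 2
      ≤ ∑ i, ∑ j, a i j ^ 2 := by
  classical
  have hdiff : (Finset.univ \ {(0 : Fin (n + 2))}) = Finset.univ.erase 0 := by
    simp [Finset.sdiff_singleton_eq_erase]
  rw [hdiff]
  set E := Finset.univ.erase (0 : Fin (n + 2)) with hE
  set S := ∑ h ∈ E, a h 0 ^ 2 with hS
  set D := ∑ h ∈ E, a h h ^ 2 with hD
  -- step 1: lower bound for the full sum
  have h1 : a 0 0 ^ 2 + 2 * S + D ≤ ∑ i, ∑ j, a i j ^ 2 := by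
    have hsplit : ∑ i, ∑ j, a i j ^ 2
        = (∑ j, a 0 j ^ 2) + ∑ i ∈ E, ∑ j, a i j ^ 2 := by
      rw [← Finset.add_sum_erase _ _ (Finset.mem_univ 0)]
    have hrow0 : (∑ j, a 0 j ^ 2) = a 0 0 ^ 2 + S := by
      rw [← Finset.add_sum_erase _ _ (Finset.mem_univ 0)]
      congr 1
      exact Finset.sum_congr rfl fun j _ => by rw [hsymm 0 j]
    have hrows : a 0 0 ^ 2 + S + (S + D) ≤ (∑ j, a 0 j ^ 2) + ∑ i ∈ E, ∑ j, a i j ^ 2 := by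
      have hinner : ∀ i ∈ E, a i 0 ^ 2 + a i i ^ 2 ≤ ∑ j, a i j ^ 2 := by
        intro i hi
        have hne : (0 : Fin (n + 2)) ≠ i := fun h => (Finset.mem_erase.1 hi).1 h.symm
        have := Finset.sum_le_sum_of_subset_of_nonneg
          (Finset.subset_univ ({0, i} : Finset (Fin (n + 2))))
          (fun j _ _ => sq_nonneg (a i j))
        rwa [Finset.sum_pair hne] at this
      have := Finset.sum_le_sum hinner
      rw [Finset.sum_add_distrib] at this
      rw [hrow0]
      linarith
    linarith [hsplit ▸ hrows]
  -- step 2: Cauchy–Schwarz on the diagonal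
  have hm1 : (0 : ℝ) < (n + 2 : ℝ) - 1 := by
    have : (0:ℝ) ≤ (n:ℝ) := Nat.cast_nonneg n
    linarith
  have hcard : (E.card : ℝ) = (n + 2 : ℝ) - 1 := by
    rw [hE, Finset.card_erase_of_mem (Finset.mem_univ 0)]
    simp
    push_cast
    ring
  have h2 : (τ - a 0 0) ^ 2 ≤ ((n + 2 : ℝ) - 1) * D := by
    have hcs := sq_sum_le_card_mul_sum_sq (s := E) (f := fun h => a h h)
    have hτ' : τ - a 0 0 = ∑ h ∈ E, a h h := by
      rw [hτ, ← Finset.add_sum_erase _ _ (Finset.mem_univ 0)]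
      ring
    rw [hτ', ← hcard]
    exact_mod_cast hcs
  -- step 3: Young's inequality
  have h3 : (1 - ε) * a 0 0 ^ 2 - (ε⁻¹ - 1) * τ ^ 2 ≤ (τ - a 0 0) ^ 2 := by
    have hεinv : ε * ε⁻¹ = 1 := mul_inv_cancel₀ (ne_of_gt hε)
    nlinarith [sq_nonneg (ε * (a 0 0 - τ) - (1 - ε) * τ), sq_nonneg (a 0 0 - τ), hε.le]
  -- combine
  have key : ((n + 2 : ℝ) - ε) * a 0 0 ^ 2 - (ε⁻¹ - 1) * τ ^ 2
      ≤ ((n + 2 : ℝ) - 1) * (a 0 0 ^ 2 + D) := by nlinarith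
  have h4 : ((n + 2 : ℝ) - ε) / ((n + 2 : ℝ) - 1) * a 0 0 ^ 2
      - (ε⁻¹ - 1) / ((n + 2 : ℝ) - 1) * τ ^ 2 ≤ a 0 0 ^ 2 + D := by
    rw [div_mul_eq_mul_div, div_mul_eq_mul_div, div_sub_div_same, div_le_iff₀ hm1]
    nlinarith
  linarith
end
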